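/- Let γ ∈ (2/3, 1) and let 0 < ε < γ/(1−γ) − 2. Let (Z_k)_{k≥1} be independent random variables with P(Z_k = 1) = k^{−γ} = 1 − P(Z_k = 0), and define the growth times τ_0 = 0 and τ_k = inf{n > τ_{k−1} : Z_n = 1} for k ≥ 1, with Δτ_k = τ_{k+1} − τ_k. Then there exists δ′ > 0 (depending only on γ and ε) such that for all sufficiently large n, P(Δτ_n ≤ n^{1+ε}) ≤ n^{−(1+δ′)}. -/

import Mathlib

open MeasureTheory ProbabilityTheory Finset
open scoped ENNReal

/-- The growth times of the tree builder random walk: `τ_0 = 0` and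
`τ_k = inf{n > τ_{k-1} : Z_n = 1}` for `k ≥ 1` (with the convention `sInf ∅ = 0`). -/
noncomputable def growthTime {Ω : Type*} (Z : ℕ → Ω → ℕ) : ℕ → Ω → ℕ
  | 0, _ => 0
  | k + 1, ω => sInf {n : ℕ | growthTime Z k ω < n ∧ Z n ω = 1}

section aux

lemma measAll {S : Finset ℕ} (A : Set (↥S → ℕ)) : MeasurableSet A := by
  have h1 : ∀ v : ↥S → ℕ, MeasurableSet {v} := by
    intro v
    have : {v} = Set.pi Set.univ (fun i => {v i}) := by
      ext w; simp [funext_iff, eq_comm]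
    rw [this]
    exact MeasurableSet.univ_pi (fun i => measurableSet_singleton _)
  have : A = ⋃ v ∈ A, {v} := by simp
  rw [this]
  exact MeasurableSet.biUnion (Set.to_countable A) (fun v _ => h1 v)

variable {Ω : Type*} (Z : ℕ → Ω → ℕ)

/-- number of successes in `[1, t]` -/
def countZ (ω : Ω) (t : ℕ) : ℕ := ((Finset.Icc 1 t).filter (fun m => Z m ω = 1)).card

lemma countZ_mono (ω : Ω) {a b : ℕ} (h : a ≤ b) : countZ Z ω a ≤ countZ Z ω b :=
  Finset.card_le_card (Finset.filter_subset_filter _ (Finset.Icc_subset_Icc_right h))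

lemma countZ_step {ω : Ω} {a b : ℕ} (hab : a < b) (hb : Z b ω = 1)
    (hmid : ∀ m, a < m → m < b → Z m ω ≠ 1) : countZ Z ω b = countZ Z ω a + 1 := by
  have hsplit : Finset.Icc 1 b = Finset.Icc 1 a ∪ Finset.Icc (a+1) b := by
    ext m; simp only [Finset.mem_Icc, Finset.mem_union]; omega
  have hdisj : Disjoint (Finset.Icc 1 a) (Finset.Icc (a+1) b) := by
    rw [Finset.disjoint_left]; intro m hm hm'; simp only [Finset.mem_Icc] at hm hm'; omega
  have hfb : (Finset.Icc (a+1) b).filter (fun m => Z m ω = 1) = {b} := by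
    ext m
    simp only [Finset.mem_filter, Finset.mem_Icc, Finset.mem_singleton]
    constructor
    · rintro ⟨⟨h1, h2⟩, h3⟩
      by_contra hne
      exact hmid m (by omega) (by omega) h3
    · rintro rfl; exact ⟨⟨by omega, le_rfl⟩, hb⟩
  unfold countZ
  rw [hsplit, Finset.filter_union, Finset.card_union_of_disjoint
    (Finset.disjoint_filter_filter hdisj), hfb, Finset.card_singleton]

/-- ω is `good` if there are infinitely many successes -/
def GoodZ (ω : Ω) : Prop := ∀ t : ℕ, ∃ m, t < m ∧ Z m ω = 1

lemma tau_props {ω : Ω} (hg : GoodZ Z ω) : ∀ k : ℕ,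
    growthTime Z k ω < growthTime Z (k+1) ω ∧ Z (growthTime Z (k+1) ω) ω = 1 ∧
      countZ Z ω (growthTime Z k ω) = k := by
  intro k
  induction k with
  | zero =>
      have hne : {n : ℕ | growthTime Z 0 ω < n ∧ Z n ω = 1}.Nonempty := by
        obtain ⟨m, hm, hz⟩ := hg (growthTime Z 0 ω); exact ⟨m, hm, hz⟩
      have hmem := Nat.sInf_mem hne
      refine ⟨hmem.1, hmem.2, ?_⟩
      show countZ Z ω 0 = 0
      simp [countZ]
  | succ k ih =>
      obtain ⟨hlt, hz, hcount⟩ := ih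
      have hne : {n : ℕ | growthTime Z (k+1) ω < n ∧ Z n ω = 1}.Nonempty := by
        obtain ⟨m, hm, hzz⟩ := hg (growthTime Z (k+1) ω); exact ⟨m, hm, hzz⟩
      have hmem := Nat.sInf_mem hne
      refine ⟨hmem.1, hmem.2, ?_⟩
      have hmid : ∀ m, growthTime Z k ω < m → m < growthTime Z (k+1) ω → Z m ω ≠ 1 := by
        intro m h1 h2 hzm
        have : sInf {n : ℕ | growthTime Z k ω < n ∧ Z n ω = 1} ≤ m := Nat.sInf_le ⟨h1, hzm⟩
        have h3 : growthTime Z (k+1) ω = sInf {n : ℕ | growthTime Z k ω < n ∧ Z n ω = 1} := rfl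
        omega
      rw [countZ_step Z hlt hz hmid, hcount]

lemma sum_rpow_le (γ : ℝ) (hγ₀ : 0 < γ) (hγ₂ : γ < 1) (T : ℕ) (hT : 1 ≤ T) :
    ∑ k ∈ Finset.Icc 1 T, (k:ℝ) ^ (-γ) ≤ 1 + (T:ℝ) ^ (1 - γ) / (1 - γ) := by
  have hanti : AntitoneOn (fun x : ℝ => x ^ (-γ)) (Set.Icc (1:ℝ) (1 + (T - 1 : ℕ))) := by
    intro x hx y hy hxy
    exact Real.rpow_le_rpow_of_nonpos (lt_of_lt_of_le zero_lt_one hx.1) hxy (by linarith)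
  have hsum := hanti.sum_le_integral
  have hint : ∫ x in (1:ℝ)..(1 + (T - 1 : ℕ)), x ^ (-γ)
      = ((1 + ((T:ℝ) - 1)) ^ (1 - γ) - 1) / (1 - γ) := by
    rw [integral_rpow (Or.inl (by linarith))]
    have : (T - 1 : ℕ) = (T:ℝ) - 1 := by
      push_cast [Nat.cast_sub hT]; ring
    rw [this]
    norm_num [neg_add_eq_sub]
  have hsplit : ∑ k ∈ Finset.Icc 1 T, (k:ℝ) ^ (-γ)
      = 1 + ∑ i ∈ Finset.range (T - 1), ((1:ℝ) + (i + 1 : ℕ)) ^ (-γ) := by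
    have h1 : Finset.Icc 1 T = insert 1 (Finset.Icc 2 T) := by
      ext m; simp only [Finset.mem_insert, Finset.mem_Icc]; omega
    rw [h1, Finset.sum_insert (by simp)]
    congr 1
    · norm_num
    · rw [Finset.sum_bij' (fun (k : ℕ) _ => k - 2) (fun (i : ℕ) _ => i + 2)]
      · intro k hk; simp only [Finset.mem_Icc] at hk; simp only [Finset.mem_range]; omega
      · intro i hi; simp only [Finset.mem_range] at hi; simp only [Finset.mem_Icc]; omega
      · intro k hk; simp only [Finset.mem_Icc] at hk; omega
      · intro i hi; simp only [Finset.mem_range] at hi; omega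
      · intro k hk
        simp only [Finset.mem_Icc] at hk
        congr 1
        have : (k - 2 + 1 : ℕ) = (k:ℝ) - 1 := by push_cast [Nat.cast_sub (by omega : 2 ≤ k)]; ring
        rw [this]; ring
  rw [hsplit]
  have h2 : ((1:ℝ) + ((T:ℝ) - 1)) ^ (1 - γ) = (T:ℝ) ^ (1-γ) := by norm_num
  have h3 := hsum.trans_eq hint
  rw [h2] at h3
  have h4 : ((T:ℝ) ^ (1 - γ) - 1) / (1 - γ) ≤ (T:ℝ) ^ (1 - γ) / (1 - γ) := by
    apply div_le_div_of_nonneg_right _ (by linarith)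
    linarith
  linarith [h3, h4]

variable {Ω : Type*} [MeasurableSpace Ω] (Z : ℕ → Ω → ℕ) {μ : Measure Ω} [IsProbabilityMeasure μ]

lemma indep_helper (hZmeas : ∀ k, Measurable (Z k))
    (hZindep : iIndepFun Z μ)
    (S T : Finset ℕ) (hST : Disjoint S T) (A : Set (↥S → ℕ)) (B : Set (↥T → ℕ)) :
    μ ((fun ω (i : ↥S) => Z i ω) ⁻¹' A ∩ (fun ω (i : ↥T) => Z i ω) ⁻¹' B)
      = μ ((fun ω (i : ↥S) => Z i ω) ⁻¹' A) * μ ((fun ω (i : ↥T) => Z i ω) ⁻¹' B) := by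
  have h := hZindep.indepFun_finset S T hST hZmeas
  exact h.measure_inter_preimage_eq_mul A B (measAll A) (measAll B)

lemma Ct_preimage (n t : ℕ) (ht : 1 ≤ t) :
    {ω | Z t ω = 1 ∧ countZ Z ω (t-1) = n-1}
      = (fun ω (i : ↥(Finset.Icc 1 t)) => Z i ω) ⁻¹'
        {v : ↥(Finset.Icc 1 t) → ℕ |
          v ⟨t, Finset.mem_Icc.2 ⟨ht, le_rfl⟩⟩ = 1 ∧
          (Finset.univ.filter (fun i : ↥(Finset.Icc 1 t) => (i:ℕ) ≠ t ∧ v i = 1)).card = n - 1} := by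
  ext ω
  simp only [Set.mem_setOf_eq, Set.mem_preimage]
  constructor
  · rintro ⟨h1, h2⟩
    refine ⟨h1, ?_⟩
    rw [← h2]
    unfold countZ
    apply Finset.card_bij (fun (i : ↥(Finset.Icc 1 t)) _ => (i : ℕ))
    · intro i hi
      simp only [Finset.mem_filter, Finset.mem_univ, true_and] at hi
      have := i.2
      simp only [Finset.mem_Icc] at this
      simp only [Finset.mem_filter, Finset.mem_Icc]
      exact ⟨⟨this.1, by omega⟩, hi.2⟩
    · intro i _ j _ h
      exact Subtype.ext h
    · intro m hm
      simp only [Finset.mem_filter, Finset.mem_Icc] at hm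
      refine ⟨⟨m, Finset.mem_Icc.2 ⟨hm.1.1, by omega⟩⟩, ?_, rfl⟩
      simp only [Finset.mem_filter, Finset.mem_univ, true_and]
      exact ⟨by omega, hm.2⟩
  · rintro ⟨h1, h2⟩
    refine ⟨h1, ?_⟩
    rw [← h2]
    unfold countZ
    symm
    apply Finset.card_bij (fun (i : ↥(Finset.Icc 1 t)) _ => (i : ℕ))
    · intro i hi
      simp only [Finset.mem_filter, Finset.mem_univ, true_and] at hi
      have := i.2
      simp only [Finset.mem_Icc] at this
      simp only [Finset.mem_filter, Finset.mem_Icc]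
      exact ⟨⟨this.1, by omega⟩, hi.2⟩
    · intro i _ j _ h
      exact Subtype.ext h
    · intro m hm
      simp only [Finset.mem_filter, Finset.mem_Icc] at hm
      refine ⟨⟨m, Finset.mem_Icc.2 ⟨hm.1.1, by omega⟩⟩, ?_, rfl⟩
      simp only [Finset.mem_filter, Finset.mem_univ, true_and]
      exact ⟨by omega, hm.2⟩

lemma Bt_preimage (t L : ℕ) :
    (⋃ m ∈ Finset.Icc (t+1) (t+L), {ω | Z m ω = 1})
      = (fun ω (i : ↥(Finset.Icc (t+1) (t+L))) => Z i ω) ⁻¹'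
        {v : ↥(Finset.Icc (t+1) (t+L)) → ℕ | ∃ i, v i = 1} := by
  ext ω
  simp only [Set.mem_iUnion, Set.mem_setOf_eq, Set.mem_preimage]
  constructor
  · rintro ⟨m, hm, hz⟩; exact ⟨⟨m, hm⟩, hz⟩
  · rintro ⟨⟨m, hm⟩, hz⟩; exact ⟨m, hm, hz⟩

lemma Ct_inter_Bt (γ : ℝ) (hγ₀ : 0 < γ) (hZmeas : ∀ k, Measurable (Z k))
    (hZindep : iIndepFun Z μ)
    (hZone : ∀ k : ℕ, 1 ≤ k → μ {ω | Z k ω = 1} = ENNReal.ofReal ((k : ℝ) ^ (-γ)))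
    (n t L : ℕ) (ht : 1 ≤ t) :
    μ ({ω | Z t ω = 1 ∧ countZ Z ω (t-1) = n-1} ∩ ⋃ m ∈ Finset.Icc (t+1) (t+L), {ω | Z m ω = 1})
      ≤ μ {ω | Z t ω = 1 ∧ countZ Z ω (t-1) = n-1}
        * ENNReal.ofReal ((L : ℝ) * ((t:ℝ)+1) ^ (-γ)) := by
  rw [Ct_preimage Z n t ht, Bt_preimage Z t L]
  have hdisj : Disjoint (Finset.Icc 1 t) (Finset.Icc (t+1) (t+L)) := by
    rw [Finset.disjoint_left]
    intro a ha ha'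
    simp only [Finset.mem_Icc] at ha ha'
    omega
  rw [indep_helper Z hZmeas hZindep _ _ hdisj]
  apply mul_le_mul_right
  rw [← Bt_preimage Z t L]
  calc μ (⋃ m ∈ Finset.Icc (t+1) (t+L), {ω | Z m ω = 1})
      ≤ ∑ m ∈ Finset.Icc (t+1) (t+L), μ {ω | Z m ω = 1} := measure_biUnion_finset_le _ _
    _ ≤ ∑ m ∈ Finset.Icc (t+1) (t+L), ENNReal.ofReal (((t:ℝ)+1) ^ (-γ)) := by
        apply Finset.sum_le_sum
        intro m hm
        simp only [Finset.mem_Icc] at hm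
        rw [hZone m (by omega)]
        apply ENNReal.ofReal_le_ofReal
        apply Real.rpow_le_rpow_of_nonpos (by positivity)
          (by exact_mod_cast by omega : ((t:ℝ)+1) ≤ (m:ℝ)) (by linarith)
    _ = (L : ℕ) • ENNReal.ofReal (((t:ℝ)+1) ^ (-γ)) := by
        rw [Finset.sum_const, Nat.card_Icc]
        congr 1; omega
    _ = ENNReal.ofReal ((L : ℝ) * ((t:ℝ)+1) ^ (-γ)) := by
        rw [nsmul_eq_mul, ← ENNReal.ofReal_natCast L, ← ENNReal.ofReal_mul (by positivity)]

lemma nbad_null (γ : ℝ) {μ : Measure Ω} [IsProbabilityMeasure μ]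
    (hγ₀ : 0 < γ) (hγ₂ : γ < 1) (hZmeas : ∀ k, Measurable (Z k))
    (hZindep : iIndepFun Z μ)
    (hZone : ∀ k : ℕ, 1 ≤ k → μ {ω | Z k ω = 1} = ENNReal.ofReal ((k : ℝ) ^ (-γ)))
    (t : ℕ) : μ {ω | ∀ m, t < m → Z m ω ≠ 1} = 0 := by
  have key : ∀ M : ℕ, 2 * t + 2 ≤ M →
      μ {ω | ∀ m, t < m → Z m ω ≠ 1} ≤ ENNReal.ofReal (Real.exp (-(M : ℝ) ^ (1 - γ) / 2)) := by
    intro M hM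
    have hsub : {ω | ∀ m, t < m → Z m ω ≠ 1} ⊆ ⋂ m ∈ Finset.Icc (t+1) M, (Z m ⁻¹' {1})ᶜ := by
      intro ω hω
      simp only [Set.mem_iInter, Set.mem_compl_iff, Set.mem_preimage, Set.mem_singleton_iff]
      intro m hm
      simp only [Finset.mem_Icc] at hm
      exact hω m (by omega)
    refine (measure_mono hsub).trans ?_
    have hprod : μ (⋂ m ∈ Finset.Icc (t+1) M, (Z m ⁻¹' {1})ᶜ)
        = ∏ m ∈ Finset.Icc (t+1) M, μ ((Z m ⁻¹' {1})ᶜ) := by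
      refine hZindep.meas_biInter (fun m _ => ?_)
      exact ⟨({1} : Set ℕ)ᶜ, (measurableSet_singleton 1).compl, rfl⟩
    rw [hprod]
    have hfac : ∀ m ∈ Finset.Icc (t+1) M,
        μ ((Z m ⁻¹' {1})ᶜ) ≤ ENNReal.ofReal (Real.exp (-(M : ℝ) ^ (-γ))) := by
      intro m hm
      simp only [Finset.mem_Icc] at hm
      have hm1 : 1 ≤ m := by omega
      have hmM : (m : ℝ) ≤ M := by exact_mod_cast hm.2
      have hpos : (0:ℝ) < m := by exact_mod_cast hm1
      have hple : ((M:ℝ)) ^ (-γ) ≤ (m : ℝ) ^ (-γ) :=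
        Real.rpow_le_rpow_of_nonpos hpos hmM (by linarith)
      have hone : μ (Z m ⁻¹' {1}) = ENNReal.ofReal ((m : ℝ) ^ (-γ)) := hZone m hm1
      rw [prob_compl_eq_one_sub ((hZmeas m) (measurableSet_singleton 1)), hone]
      have h1 : (1 : ℝ≥0∞) - ENNReal.ofReal ((m : ℝ) ^ (-γ))
          ≤ ENNReal.ofReal (1 - (M : ℝ) ^ (-γ)) := by
        rw [tsub_le_iff_right, ← ENNReal.ofReal_add, ← ENNReal.ofReal_one]
        · refine ENNReal.ofReal_le_ofReal (by linarith)
        · have hMpos : (0:ℝ) < M := by exact_mod_cast (by omega : 0 < M)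
          have : ((M:ℝ)) ^ (-γ) ≤ 1 := by
            rw [show (1:ℝ) = (M:ℝ) ^ (0:ℝ) by simp]
            apply Real.rpow_le_rpow_of_exponent_le (by exact_mod_cast by omega) (by linarith)
          linarith
        · exact Real.rpow_nonneg hpos.le _
      refine h1.trans (ENNReal.ofReal_le_ofReal ?_)
      have := Real.add_one_le_exp (-(M:ℝ) ^ (-γ))
      linarith
    calc ∏ m ∈ Finset.Icc (t+1) M, μ ((Z m ⁻¹' {1})ᶜ)
        ≤ ∏ m ∈ Finset.Icc (t+1) M, ENNReal.ofReal (Real.exp (-(M : ℝ) ^ (-γ))) :=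
          Finset.prod_le_prod' hfac
      _ = ENNReal.ofReal (Real.exp (-(M : ℝ) ^ (-γ))) ^ (M - t) := by
          rw [Finset.prod_const, Nat.card_Icc]; congr 1; omega
      _ = ENNReal.ofReal (Real.exp (-(M : ℝ) ^ (-γ)) ^ (M - t)) := by
          rw [ENNReal.ofReal_pow (Real.exp_nonneg _)]
      _ = ENNReal.ofReal (Real.exp (((M - t : ℕ):ℝ) * (-(M : ℝ) ^ (-γ)))) := by
          rw [Real.exp_nat_mul]
      _ ≤ ENNReal.ofReal (Real.exp (-(M : ℝ) ^ (1 - γ) / 2)) := by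
          apply ENNReal.ofReal_le_ofReal
          apply Real.exp_le_exp.2
          have hcast : ((M - t : ℕ) : ℝ) ≥ (M : ℝ) / 2 := by
            have h2t : 2 * t ≤ M := by omega
            have hle : t ≤ M := by omega
            have hc : ((M - t : ℕ) : ℝ) = (M:ℝ) - (t:ℝ) := by
              push_cast [Nat.cast_sub hle]; ring
            rw [hc]
            have : (2:ℝ) * t ≤ M := by exact_mod_cast h2t
            linarith
          have hMpos : (0:ℝ) < M := by exact_mod_cast (by omega : 0 < M)
          have hrpow_pos : (0:ℝ) < (M:ℝ) ^ (-γ) := Real.rpow_pos_of_pos hMpos _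
          have hsplit : (M:ℝ) ^ (1 - γ) = (M:ℝ) * (M:ℝ) ^ (-γ) := by
            rw [← Real.rpow_one_add' (by positivity) (by intro h; linarith)]
            ring_nf
          rw [hsplit]
          nlinarith [hcast, hrpow_pos]
  have htend : Filter.Tendsto (fun M : ℕ => ENNReal.ofReal (Real.exp (-(M : ℝ) ^ (1 - γ) / 2)))
      Filter.atTop (nhds 0) := by
    rw [show (0:ℝ≥0∞) = ENNReal.ofReal 0 by simp]
    apply ENNReal.tendsto_ofReal
    have h1 : Filter.Tendsto (fun x : ℝ => -(x ^ (1 - γ)) / 2) Filter.atTop Filter.atBot := by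
      apply Filter.Tendsto.atBot_div_const (by norm_num)
      exact Filter.tendsto_neg_atBot_iff.mpr (tendsto_rpow_atTop (by linarith))
    have h2 := (Real.tendsto_exp_atBot.comp h1).comp (tendsto_natCast_atTop_atTop (R := ℝ))
    refine h2.congr (fun M => ?_)
    simp only [Function.comp_apply]
  have hev : ∀ᶠ M : ℕ in Filter.atTop, μ {ω | ∀ m, t < m → Z m ω ≠ 1}
      ≤ ENNReal.ofReal (Real.exp (-(M : ℝ) ^ (1 - γ) / 2)) :=
    Filter.eventually_atTop.2 ⟨2 * t + 2, key⟩
  simpa using ge_of_tendsto htend hev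

lemma chernoff_bound (γ : ℝ) {μ : Measure Ω} [IsProbabilityMeasure μ]
    (hγ₀ : 0 < γ) (hγ₂ : γ < 1) (hZmeas : ∀ k, Measurable (Z k))
    (hZindep : iIndepFun Z μ)
    (hZzero : ∀ k : ℕ, 1 ≤ k → μ {ω | Z k ω = 0} = ENNReal.ofReal (1 - (k : ℝ) ^ (-γ)))
    (n T : ℕ) :
    μ {ω | (n:ℝ) ≤ ∑ k ∈ Finset.Icc 1 T, (if Z k ω = 0 then (0:ℝ) else 1)}
      ≤ ENNReal.ofReal (Real.exp (-(n:ℝ)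
          + (Real.exp 1 - 1) * ∑ k ∈ Finset.Icc 1 T, (k:ℝ) ^ (-γ))) := by
  classical
  set X : ℕ → Ω → ℝ := fun k ω => if Z k ω = 0 then (0:ℝ) else 1 with hX
  have hXmeas : ∀ k, Measurable (X k) := by
    intro k
    exact Measurable.ite ((hZmeas k) (measurableSet_singleton 0)) measurable_const measurable_const
  have hXindep : iIndepFun X μ := by
    have : ∀ k : ℕ, Measurable (fun z : ℕ => if z = 0 then (0:ℝ) else 1) :=
      fun k => measurable_from_top
    exact hZindep.comp _ this
  have hXrange : ∀ k ω, X k ω = 0 ∨ X k ω = 1 := by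
    intro k ω; by_cases h : Z k ω = 0 <;> simp [hX, h]
  have hXnonneg : ∀ k ω, 0 ≤ X k ω := by
    intro k ω; rcases hXrange k ω with h | h <;> rw [h] <;> norm_num
  have hXle1 : ∀ k ω, X k ω ≤ 1 := by
    intro k ω; rcases hXrange k ω with h | h <;> rw [h] <;> norm_num
  set S : Ω → ℝ := fun ω => ∑ k ∈ Finset.Icc 1 T, X k ω with hS
  have hSmeas : Measurable S := by
    apply Finset.measurable_sum; intro k _; exact hXmeas k
  have hSle : ∀ ω, S ω ≤ T := by
    intro ω
    calc S ω ≤ ∑ k ∈ Finset.Icc 1 T, 1 := Finset.sum_le_sum (fun k _ => hXle1 k ω)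
    _ = ((Finset.Icc 1 T).card : ℝ) := by simp
    _ ≤ T := by rw [Nat.card_Icc]; simp
  have hint : Integrable (fun ω => Real.exp (1 * S ω)) μ := by
    refine Integrable.mono' (integrable_const (Real.exp T)) ?_ ?_
    · exact (hSmeas.const_mul 1).exp.aestronglyMeasurable
    · refine Filter.Eventually.of_forall (fun ω => ?_)
      rw [Real.norm_eq_abs, abs_of_pos (Real.exp_pos _)]
      exact Real.exp_le_exp.2 (by simpa using hSle ω)
  have hcher := measure_ge_le_exp_mul_mgf (X := S) (μ := μ) (t := 1) (n:ℝ) zero_le_one hint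
  have hSsum : S = ∑ k ∈ Finset.Icc 1 T, X k := by
    funext ω; rw [hS]; simp
  have hmgf : mgf S μ 1 = ∏ k ∈ Finset.Icc 1 T, mgf (X k) μ 1 := by
    rw [hSsum]; exact hXindep.mgf_sum hXmeas _
  have hmgfk : ∀ k, 1 ≤ k → mgf (X k) μ 1 = 1 + (Real.exp 1 - 1) * (k:ℝ) ^ (-γ) := by
    intro k hk
    have hmu : μ {ω | Z k ω ≠ 0} = ENNReal.ofReal ((k:ℝ) ^ (-γ)) := by
      have hc : {ω | Z k ω ≠ 0} = {ω | Z k ω = 0}ᶜ := by ext ω; simp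
      have hle1 : (k:ℝ) ^ (-γ) ≤ 1 := by
        rw [show (1:ℝ) = (k:ℝ) ^ (0:ℝ) by simp]
        apply Real.rpow_le_rpow_of_exponent_le (by exact_mod_cast hk) (by linarith)
      have hnn : (0:ℝ) ≤ (k:ℝ) ^ (-γ) := Real.rpow_nonneg (by positivity) _
      rw [hc, prob_compl_eq_one_sub
        (show MeasurableSet {ω | Z k ω = 0} from (hZmeas k) (measurableSet_singleton 0)),
        hZzero k hk]
      rw [ENNReal.ofReal_sub _ hnn]
      simp [ENNReal.sub_sub_cancel, ENNReal.ofReal_le_one.2 hle1]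
    have hXind : X k = Set.indicator {ω | Z k ω ≠ 0} (fun _ => (1:ℝ)) := by
      funext ω
      by_cases h : Z k ω = 0 <;> simp [hX, h, Set.indicator_apply]
    have hmeas_set : MeasurableSet {ω | Z k ω ≠ 0} := by
      have : {ω | Z k ω ≠ 0} = {ω | Z k ω = 0}ᶜ := by ext ω; simp
      rw [this]; exact ((hZmeas k) (measurableSet_singleton 0)).compl
    have hexpX : ∀ ω, Real.exp (1 * X k ω) = 1 + (Real.exp 1 - 1) * X k ω := by
      intro ω; rcases hXrange k ω with h | h <;> rw [h] <;> simp
    unfold mgf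
    rw [integral_congr_ae (Filter.Eventually.of_forall hexpX)]
    rw [integral_add (integrable_const 1)]
    · rw [integral_const]
      rw [integral_const_mul, hXind, integral_indicator_const _ hmeas_set]
      simp [measureReal_def, hmu, ENNReal.toReal_ofReal (Real.rpow_nonneg (by positivity : (0:ℝ) ≤ (k:ℝ)) _)]
    · apply Integrable.const_mul
      refine Integrable.mono' (integrable_const 1) (hXmeas k).aestronglyMeasurable ?_
      refine Filter.Eventually.of_forall (fun ω => ?_)
      rw [Real.norm_eq_abs, abs_of_nonneg (hXnonneg k ω)]
      exact hXle1 k ω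
  have hprod_le : ∏ k ∈ Finset.Icc 1 T, mgf (X k) μ 1
      ≤ Real.exp ((Real.exp 1 - 1) * ∑ k ∈ Finset.Icc 1 T, (k:ℝ) ^ (-γ)) := by
    rw [Finset.mul_sum, Real.exp_sum]
    apply Finset.prod_le_prod
    · intro k hk
      rw [hmgfk k (Finset.mem_Icc.1 hk).1]
      have : (0:ℝ) ≤ (k:ℝ) ^ (-γ) := Real.rpow_nonneg (by positivity) _
      nlinarith [Real.exp_one_gt_d9]
    · intro k hk
      rw [hmgfk k (Finset.mem_Icc.1 hk).1]
      have h := Real.add_one_le_exp ((Real.exp 1 - 1) * (k:ℝ) ^ (-γ))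
      linarith
  have hfinal : (μ {ω | (n:ℝ) ≤ S ω}).toReal
      ≤ Real.exp (-(n:ℝ) + (Real.exp 1 - 1) * ∑ k ∈ Finset.Icc 1 T, (k:ℝ) ^ (-γ)) := by
    calc (μ {ω | (n:ℝ) ≤ S ω}).toReal ≤ Real.exp (-1 * n) * mgf S μ 1 := hcher
    _ ≤ Real.exp (-1 * n)
        * Real.exp ((Real.exp 1 - 1) * ∑ k ∈ Finset.Icc 1 T, (k:ℝ) ^ (-γ)) := by
        apply mul_le_mul_of_nonneg_left _ (Real.exp_nonneg _)
        rw [hmgf]; exact hprod_le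
    _ = Real.exp (-(n:ℝ) + (Real.exp 1 - 1) * ∑ k ∈ Finset.Icc 1 T, (k:ℝ) ^ (-γ)) := by
        rw [← Real.exp_add]; ring_nf
  have heq : μ {ω | (n:ℝ) ≤ S ω} = ENNReal.ofReal ((μ {ω | (n:ℝ) ≤ S ω}).toReal) := by
    rw [ENNReal.ofReal_toReal (measure_ne_top μ _)]
  rw [show {ω | (n:ℝ) ≤ ∑ k ∈ Finset.Icc 1 T, (if Z k ω = 0 then (0:ℝ) else 1)}
      = {ω | (n:ℝ) ≤ S ω} from rfl, heq]
  exact ENNReal.ofReal_le_ofReal hfinal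

end aux

set_option maxHeartbeats 1000000 in
/-- **Increments of growth times are rarely small.**
Let `γ ∈ (2/3, 1)` and `0 < ε < γ/(1-γ) - 2`.  Let `(Z_k)_{k≥1}` be independent with
`P(Z_k = 1) = k^{-γ} = 1 - P(Z_k = 0)` and let `τ_k` be the growth times, `Δτ_k = τ_{k+1} - τ_k`.
Then there exists `δ' > 0` such that for all sufficiently large `n`,
`P(Δτ_n ≤ n^{1+ε}) ≤ n^{-(1+δ')}`. -/
theorem growth_increment_tail_bound
    {Ω : Type*} [MeasurableSpace Ω] (μ : Measure Ω) [IsProbabilityMeasure μ]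
    (γ ε : ℝ) (hγ₁ : 2 / 3 < γ) (hγ₂ : γ < 1)
    (hε₁ : 0 < ε) (hε₂ : ε < γ / (1 - γ) - 2)
    (Z : ℕ → Ω → ℕ) (hZmeas : ∀ k, Measurable (Z k))
    (hZindep : iIndepFun Z μ)
    (hZone : ∀ k : ℕ, 1 ≤ k → μ {ω | Z k ω = 1} = ENNReal.ofReal ((k : ℝ) ^ (-γ)))
    (hZzero : ∀ k : ℕ, 1 ≤ k → μ {ω | Z k ω = 0} = ENNReal.ofReal (1 - (k : ℝ) ^ (-γ))) :
    ∃ δ' : ℝ, 0 < δ' ∧ ∃ N : ℕ, ∀ n ≥ N,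
      μ {ω | ((growthTime Z (n + 1) ω - growthTime Z n ω : ℕ) : ℝ) ≤ (n : ℝ) ^ (1 + ε)}
        ≤ ENNReal.ofReal ((n : ℝ) ^ (-(1 + δ'))) := by
  classical
  have hγ₀ : (0:ℝ) < γ := by linarith
  have h1γ : (0:ℝ) < 1 - γ := by linarith
  set η : ℝ := γ / (1 - γ) - 2 - ε with hη_def
  have hη : 0 < η := by simp only [hη_def]; linarith
  set δ' : ℝ := η / 2 with hδ'_def
  have hδ' : 0 < δ' := by positivity
  refine ⟨δ', hδ', ?_⟩
  set β : ℝ := (2 + ε + 3 * η / 4) / γ with hβ_def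
  have hβpos : 0 < β := by positivity
  have hβγ : β * γ = 2 + ε + 3 * η / 4 := by rw [hβ_def]; field_simp
  have hgid : γ = (2 + ε + η) * (1 - γ) := by
    have h : γ / (1 - γ) = 2 + ε + η := by simp only [hη_def]; ring
    field_simp at h
    linarith
  set ρ : ℝ := 1 - β * (1 - γ) with hρ_def
  have hρ : 0 < ρ := by
    have h25 : β * (1 - γ) * (2 + ε + η) = 2 + ε + 3 * η / 4 := by
      calc β * (1 - γ) * (2 + ε + η) = β * ((2 + ε + η) * (1 - γ)) := by ring
      _ = β * γ := by rw [← hgid]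
      _ = 2 + ε + 3 * η / 4 := hβγ
    have hpos : (0:ℝ) < 2 + ε + η := by linarith
    simp only [hρ_def]
    nlinarith [h25, hη, hpos]
  set c1 : ℝ := Real.exp 1 - 1 with hc1_def
  have hc1 : 0 < c1 := by simp only [hc1_def]; nlinarith [Real.exp_one_gt_d9]
  set c2 : ℝ := 2 * c1 / (1 - γ) with hc2_def
  have hc2 : 0 < c2 := by positivity
  -- eventual facts
  have ev1 : ∀ᶠ n : ℕ in Filter.atTop, c2 * (n:ℝ) ^ (-ρ) ≤ 1/4 := by
    have t1 : Filter.Tendsto (fun n : ℕ => c2 * (n:ℝ) ^ (-ρ)) Filter.atTop (nhds (c2 * 0)) :=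
      (((tendsto_rpow_neg_atTop hρ).comp (tendsto_natCast_atTop_atTop (R := ℝ))).const_mul c2)
    rw [mul_zero] at t1
    exact t1.eventually (eventually_le_nhds (by norm_num))
  have ev2 : ∀ᶠ n : ℕ in Filter.atTop,
      (n:ℝ) ^ (1 + δ') * Real.exp (-(1/2) * (n:ℝ)) ≤ 1/2 := by
    have t2 := (tendsto_rpow_mul_exp_neg_mul_atTop_nhds_zero (1 + δ') (1/2)
      (by norm_num)).comp (tendsto_natCast_atTop_atTop (R := ℝ))
    exact t2.eventually (eventually_le_nhds (by norm_num))
  have ev3 : ∀ᶠ n : ℕ in Filter.atTop, (4:ℝ) ≤ (n:ℝ) ^ (η/4) := by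
    have t3 := (tendsto_rpow_atTop (by positivity : (0:ℝ) < η/4)).comp
      (tendsto_natCast_atTop_atTop (R := ℝ))
    exact t3.eventually_ge_atTop 4
  have ev4 : ∀ᶠ n : ℕ in Filter.atTop, 4 * c1 ≤ (n:ℝ) :=
    (tendsto_natCast_atTop_atTop (R := ℝ)).eventually_ge_atTop (4 * c1)
  have ev5 : ∀ᶠ n : ℕ in Filter.atTop, 1 ≤ n := Filter.eventually_ge_atTop 1
  obtain ⟨N, hN⟩ := Filter.eventually_atTop.1 (ev1.and (ev2.and (ev3.and (ev4.and ev5))))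
  refine ⟨N, fun n hn => ?_⟩
  obtain ⟨he1, he2, he3, he4, hn1⟩ := hN n hn
  
  have hn1R : (1:ℝ) ≤ (n:ℝ) := by exact_mod_cast hn1
  have hnpos : (0:ℝ) < (n:ℝ) := by linarith
  set T : ℕ := ⌈(n:ℝ) ^ β⌉₊ with hT_def
  set L : ℕ := ⌈(n:ℝ) ^ (1 + ε)⌉₊ with hL_def
  have hnb1 : (1:ℝ) ≤ (n:ℝ) ^ β := by
    calc (1:ℝ) = (n:ℝ) ^ (0:ℝ) := by simp
    _ ≤ (n:ℝ) ^ β := Real.rpow_le_rpow_of_exponent_le hn1R hβpos.le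
  have hne1 : (1:ℝ) ≤ (n:ℝ) ^ (1 + ε) := by
    calc (1:ℝ) = (n:ℝ) ^ (0:ℝ) := by simp
    _ ≤ (n:ℝ) ^ (1 + ε) := Real.rpow_le_rpow_of_exponent_le hn1R (by linarith)
  have hT1 : 1 ≤ T := Nat.one_le_iff_ne_zero.2 (by
    simp only [hT_def, ne_eq, Nat.ceil_eq_zero, not_le]
    linarith)
  have hTge : (n:ℝ) ^ β ≤ (T:ℝ) := Nat.le_ceil _
  have hTle : (T:ℝ) ≤ 2 * (n:ℝ) ^ β := by
    have h := Nat.ceil_lt_add_one (by positivity : (0:ℝ) ≤ (n:ℝ) ^ β)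
    simp only [hT_def]
    linarith
  have hLge : (n:ℝ) ^ (1 + ε) ≤ (L:ℝ) := Nat.le_ceil _
  have hLle : (L:ℝ) ≤ 2 * (n:ℝ) ^ (1 + ε) := by
    have h := Nat.ceil_lt_add_one (by positivity : (0:ℝ) ≤ (n:ℝ) ^ (1 + ε))
    simp only [hL_def]
    linarith
  set C : ℕ → Set Ω := fun t => {ω | Z t ω = 1 ∧ countZ Z ω (t-1) = n-1} with hC_def
  set B : ℕ → Set Ω := fun t => ⋃ m ∈ Finset.Icc (t+1) (t+L), {ω | Z m ω = 1} with hB_def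
  set Nbad : Set Ω := ⋃ t : ℕ, {ω | ∀ m, t < m → Z m ω ≠ 1} with hNbad_def
  set A1 : Set Ω := {ω | (n:ℝ) ≤ ∑ k ∈ Finset.Icc 1 T, (if Z k ω = 0 then (0:ℝ) else 1)}
    with hA1_def
  set A2 : Set Ω := ⋃ t ∈ {t : ℕ | T < t}, (C t ∩ B t) with hA2_def
  -- event inclusion
  have hsub : {ω | ((growthTime Z (n + 1) ω - growthTime Z n ω : ℕ) : ℝ) ≤ (n : ℝ) ^ (1 + ε)}
      ⊆ (Nbad ∪ A1) ∪ A2 := by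
    intro ω hω
    simp only [Set.mem_setOf_eq] at hω
    by_cases hg : GoodZ Z ω
    · obtain ⟨hlt, hz1, hcn⟩ := tau_props Z hg n
      have hztn : Z (growthTime Z n ω) ω = 1 := by
        have h := (tau_props Z hg (n-1)).2.1
        rwa [show n - 1 + 1 = n from by omega] at h
      set t := growthTime Z n ω with ht_def
      have hΔle : growthTime Z (n+1) ω - t ≤ L := by
        have hc : ((growthTime Z (n + 1) ω - t : ℕ):ℝ) ≤ (L:ℝ) := le_trans hω hLge
        exact_mod_cast hc
      have ht1 : 1 ≤ t := by
        by_contra h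
        have h0 : t = 0 := by omega
        rw [h0] at hcn
        simp [countZ] at hcn
        omega
      rcases le_or_gt t T with hcase | hcase
      · left; right
        simp only [hA1_def, Set.mem_setOf_eq]
        have hmono : n ≤ countZ Z ω T := by
          rw [← hcn]; exact countZ_mono Z ω hcase
        have hcast : ((countZ Z ω T : ℕ):ℝ)
            = ∑ k ∈ Finset.Icc 1 T, (if Z k ω = 1 then (1:ℝ) else 0) := by
          unfold countZ
          rw [Finset.natCast_card_filter]
        calc (n:ℝ) ≤ ((countZ Z ω T : ℕ):ℝ) := by exact_mod_cast hmono
        _ = ∑ k ∈ Finset.Icc 1 T, (if Z k ω = 1 then (1:ℝ) else 0) := hcast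
        _ ≤ ∑ k ∈ Finset.Icc 1 T, (if Z k ω = 0 then (0:ℝ) else 1) := by
            apply Finset.sum_le_sum
            intro k _
            by_cases h : Z k ω = 0
            · have : Z k ω ≠ 1 := by omega
              simp [h, this]
            · simp only [h, if_false]
              split <;> norm_num
      · right
        refine Set.mem_biUnion hcase ?_
        refine ⟨⟨hztn, ?_⟩, ?_⟩
        · have hstep : countZ Z ω t = countZ Z ω (t-1) + 1 :=
            countZ_step Z (by omega) hztn (by intro m h1 h2; exfalso; omega)
          omega
        · simp only [hB_def, Set.mem_iUnion]
          refine ⟨growthTime Z (n+1) ω, ?_, hz1⟩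
          simp only [Finset.mem_Icc]
          omega
    · left; left
      simp only [GoodZ, not_forall] at hg
      obtain ⟨s, hs⟩ := hg
      refine Set.mem_iUnion.2 ⟨s, ?_⟩
      intro m hm hzm
      exact hs ⟨m, hm, hzm⟩
  have hNbad0 : μ Nbad = 0 :=
    measure_iUnion_null (fun t => nbad_null Z γ hγ₀ hγ₂ hZmeas hZindep hZone t)
  -- half bound for A1
  have hA1 : μ A1 ≤ ENNReal.ofReal ((1/2) * (n:ℝ) ^ (-(1+δ'))) := by
    have hch := chernoff_bound Z γ hγ₀ hγ₂ hZmeas hZindep hZzero n T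
    refine le_trans hch (ENNReal.ofReal_le_ofReal ?_)
    have hPT : ∑ k ∈ Finset.Icc 1 T, (k:ℝ) ^ (-γ) ≤ 1 + (T:ℝ) ^ (1-γ) / (1-γ) :=
      sum_rpow_le γ hγ₀ hγ₂ T hT1
    have hT1γ : (T:ℝ) ^ (1-γ) ≤ 2 * (n:ℝ) ^ (1-ρ) := by
      calc (T:ℝ) ^ (1-γ) ≤ (2 * (n:ℝ) ^ β) ^ (1-γ) :=
            Real.rpow_le_rpow (by positivity) hTle (by linarith)
      _ = 2 ^ (1-γ) * ((n:ℝ) ^ β) ^ (1-γ) := Real.mul_rpow (by norm_num) (by positivity)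
      _ ≤ 2 * (n:ℝ) ^ (1-ρ) := by
          have a1 : (2:ℝ) ^ (1-γ) ≤ 2 ^ (1:ℝ) :=
            Real.rpow_le_rpow_of_exponent_le (by norm_num) (by linarith)
          rw [Real.rpow_one] at a1
          have a2 : ((n:ℝ) ^ β) ^ (1-γ) = (n:ℝ) ^ (1-ρ) := by
            rw [← Real.rpow_mul hnpos.le]
            congr 1
            simp only [hρ_def]; ring
          rw [a2]
          apply mul_le_mul_of_nonneg_right a1 (Real.rpow_nonneg hnpos.le _)
    have b1 : (n:ℝ) ^ (1-ρ) = (n:ℝ) * (n:ℝ) ^ (-ρ) := by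
      rw [show (1:ℝ) - ρ = 1 + (-ρ) by ring, Real.rpow_add hnpos, Real.rpow_one]
    have b2 : c1 * ((T:ℝ) ^ (1-γ) / (1-γ)) ≤ c2 * (n:ℝ) ^ (1-ρ) := by
      have d1 : c1 * ((T:ℝ) ^ (1-γ) / (1-γ)) ≤ c1 * ((2 * (n:ℝ) ^ (1-ρ)) / (1-γ)) := by
        gcongr
      have d2 : c1 * ((2 * (n:ℝ) ^ (1-ρ)) / (1-γ)) = c2 * (n:ℝ) ^ (1-ρ) := by
        rw [hc2_def]
        field_simp
      linarith
    have hsmall : c1 * (1 + (T:ℝ) ^ (1-γ) / (1-γ)) ≤ (n:ℝ) / 2 := by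
      have b3 : c2 * (n:ℝ) ^ (1-ρ) = (c2 * (n:ℝ) ^ (-ρ)) * (n:ℝ) := by rw [b1]; ring
      have b4 : (c2 * (n:ℝ) ^ (-ρ)) * (n:ℝ) ≤ (1/4) * (n:ℝ) :=
        mul_le_mul_of_nonneg_right he1 hnpos.le
      nlinarith [b2, he4, hc1]
    have hexp : -(n:ℝ) + (Real.exp 1 - 1) * ∑ k ∈ Finset.Icc 1 T, (k:ℝ) ^ (-γ)
        ≤ -(1/2) * (n:ℝ) := by
      have hmul : (Real.exp 1 - 1) * ∑ k ∈ Finset.Icc 1 T, (k:ℝ) ^ (-γ)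
          ≤ c1 * (1 + (T:ℝ) ^ (1-γ) / (1-γ)) :=
        mul_le_mul_of_nonneg_left hPT hc1.le
      linarith
    calc Real.exp (-(n:ℝ) + (Real.exp 1 - 1) * ∑ k ∈ Finset.Icc 1 T, (k:ℝ) ^ (-γ))
        ≤ Real.exp (-(1/2) * (n:ℝ)) := Real.exp_le_exp.2 hexp
    _ ≤ (1/2) * (n:ℝ) ^ (-(1+δ')) := by
        have hprod : (n:ℝ) ^ (-(1+δ')) * (n:ℝ) ^ (1+δ') = 1 := by
          rw [← Real.rpow_add hnpos, show -(1+δ') + (1+δ') = (0:ℝ) from by ring, Real.rpow_zero]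
        calc Real.exp (-(1/2) * (n:ℝ))
            = ((n:ℝ) ^ (-(1+δ')) * (n:ℝ) ^ (1+δ')) * Real.exp (-(1/2) * (n:ℝ)) := by
              rw [hprod, one_mul]
        _ = (n:ℝ) ^ (-(1+δ')) * ((n:ℝ) ^ (1+δ') * Real.exp (-(1/2) * (n:ℝ))) := by ring
        _ ≤ (n:ℝ) ^ (-(1+δ')) * (1/2) :=
              mul_le_mul_of_nonneg_left he2 (Real.rpow_nonneg hnpos.le _)
        _ = (1/2) * (n:ℝ) ^ (-(1+δ')) := by ring
  -- half bound for A2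
  have hA2 : μ A2 ≤ ENNReal.ofReal ((1/2) * (n:ℝ) ^ (-(1+δ'))) := by
    set q : ℝ≥0∞ := ENNReal.ofReal ((L:ℝ) * ((n:ℝ) ^ β) ^ (-γ)) with hq_def
    have hqle : ∀ t : ℕ, T < t →
        ENNReal.ofReal ((L:ℝ) * ((t:ℝ)+1) ^ (-γ)) ≤ q := by
      intro t ht
      apply ENNReal.ofReal_le_ofReal
      apply mul_le_mul_of_nonneg_left _ (by positivity)
      apply Real.rpow_le_rpow_of_nonpos (by positivity)
        (by
          have h1 : (n:ℝ) ^ β ≤ (T:ℝ) := hTge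
          have h2 : (T:ℝ) ≤ (t:ℝ) := by exact_mod_cast ht.le
          linarith) (by linarith)
    have hmeasC : ∀ t : ℕ, 1 ≤ t → MeasurableSet (C t) := by
      intro t ht
      have h := Ct_preimage Z n t ht
      simp only [hC_def]
      rw [h]
      have hF : Measurable (fun ω (i : ↥(Finset.Icc 1 t)) => Z (i:ℕ) ω) :=
        measurable_pi_lambda _ (fun i => hZmeas (i:ℕ))
      exact hF (measAll _)
    have hdisj2 : ∀ a b : ℕ, 1 ≤ a → a < b → Disjoint (C a) (C b) := by
      intro a b ha hab
      rw [Set.disjoint_left]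
      rintro ω ⟨hza, hca⟩ ⟨hzb, hcb⟩
      have hstep : countZ Z ω a = countZ Z ω (a-1) + 1 :=
        countZ_step Z (by omega) hza (by intro m h1 h2; exfalso; omega)
      have hmono : countZ Z ω a ≤ countZ Z ω (b-1) := countZ_mono Z ω (by omega)
      omega
    have hpd : {t : ℕ | T < t}.PairwiseDisjoint C := by
      intro a ha b hb hne
      simp only [Set.mem_setOf_eq] at ha hb
      rcases lt_or_gt_of_ne hne with h | h
      · exact hdisj2 a b (by omega) h
      · exact (hdisj2 b a (by omega) h).symm
    have hsum1 : ∑' t : {t : ℕ | T < t}, μ (C t) ≤ 1 := by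
      rw [← measure_biUnion (Set.to_countable _) hpd
        (fun t ht => hmeasC t (by simp only [Set.mem_setOf_eq] at ht; omega))]
      exact prob_le_one
    calc μ A2 ≤ ∑' t : {t : ℕ | T < t}, μ (C t ∩ B t) :=
          measure_biUnion_le μ (Set.to_countable _) _
    _ ≤ ∑' t : {t : ℕ | T < t}, μ (C t) * q := by
        apply ENNReal.tsum_le_tsum
        intro t
        have ht1 : (1:ℕ) ≤ (t:ℕ) := by
          have := t.2
          simp only [Set.mem_setOf_eq] at this
          omega
        refine le_trans (Ct_inter_Bt Z γ hγ₀ hZmeas hZindep hZone n t L ht1) ?_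
        exact mul_le_mul_right (hqle t (by
          have := t.2
          simp only [Set.mem_setOf_eq] at this
          exact this)) _
    _ = (∑' t : {t : ℕ | T < t}, μ (C t)) * q := ENNReal.tsum_mul_right
    _ ≤ 1 * q := mul_le_mul_left hsum1 q
    _ = q := one_mul q
    _ ≤ ENNReal.ofReal ((1/2) * (n:ℝ) ^ (-(1+δ'))) := by
        apply ENNReal.ofReal_le_ofReal
        have e1 : ((n:ℝ) ^ β) ^ (-γ) = (n:ℝ) ^ (-(2+ε+3*η/4)) := by
          rw [← Real.rpow_mul hnpos.le]
          rw [show β * (-γ) = -(β*γ) from by ring, hβγ]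
        have e2 : (n:ℝ) ^ (1+ε) * (n:ℝ) ^ (-(2+ε+3*η/4))
            = (n:ℝ) ^ (-(1+δ')) * (n:ℝ) ^ (-(η/4)) := by
          rw [← Real.rpow_add hnpos, ← Real.rpow_add hnpos]
          congr 1
          simp only [hδ'_def]; ring
        have e3 : (n:ℝ) ^ (-(η/4)) ≤ 1/4 := by
          have hp : (0:ℝ) < (n:ℝ) ^ (η/4) := Real.rpow_pos_of_pos hnpos _
          rw [Real.rpow_neg hnpos.le, inv_le_comm₀ hp (by norm_num : (0:ℝ) < 1/4)]
          norm_num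
          linarith [he3]
        have hrnn : (0:ℝ) ≤ (n:ℝ) ^ (-(1+δ')) := Real.rpow_nonneg hnpos.le _
        calc (L:ℝ) * ((n:ℝ) ^ β) ^ (-γ)
            ≤ (2 * (n:ℝ) ^ (1+ε)) * ((n:ℝ) ^ β) ^ (-γ) := by
              apply mul_le_mul_of_nonneg_right hLle (by positivity)
        _ = 2 * ((n:ℝ) ^ (1+ε) * (n:ℝ) ^ (-(2+ε+3*η/4))) := by rw [e1]; ring
        _ = 2 * ((n:ℝ) ^ (-(1+δ')) * (n:ℝ) ^ (-(η/4))) := by rw [e2]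
        _ ≤ 2 * ((n:ℝ) ^ (-(1+δ')) * (1/4)) := by
              apply mul_le_mul_of_nonneg_left _ (by norm_num : (0:ℝ) ≤ 2)
              exact mul_le_mul_of_nonneg_left e3 hrnn
        _ = (1/2) * (n:ℝ) ^ (-(1+δ')) := by ring
  -- assemble
  calc μ {ω | ((growthTime Z (n + 1) ω - growthTime Z n ω : ℕ) : ℝ) ≤ (n : ℝ) ^ (1 + ε)}
      ≤ μ ((Nbad ∪ A1) ∪ A2) := measure_mono hsub
  _ ≤ μ (Nbad ∪ A1) + μ A2 := measure_union_le _ _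
  _ ≤ (μ Nbad + μ A1) + μ A2 := add_le_add_left (measure_union_le _ _) _
  _ = μ A1 + μ A2 := by rw [hNbad0, zero_add]
  _ ≤ ENNReal.ofReal ((1/2) * (n:ℝ) ^ (-(1+δ')))
      + ENNReal.ofReal ((1/2) * (n:ℝ) ^ (-(1+δ'))) := add_le_add hA1 hA2
  _ = ENNReal.ofReal ((n:ℝ) ^ (-(1+δ'))) := by
      rw [← ENNReal.ofReal_add (by positivity) (by positivity)]
      congr 1
      ring
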